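/- Let μ₄, μ₅, μ₆, μ₇ ∈ ℂ be pairwise distinct with each μⱼ ∉ {0,1}. The projective algebraic set Ŝ_μ ⊂ ℙ⁶(ℂ) defined by the five equations x₁² + x₂² + x₃² = 0, μ₄x₁² + x₂² + x₄² = 0, μ₅x₁² + x₂² + x₅² = 0, μ₆x₁² + x₂² + x₆² = 0, μ₇x₁² + x₂² + x₇² = 0 is smooth: at every point of Ŝ_μ (viewed in ℂ⁷ ∖ {0}) the 5×7 Jacobian matrix of the defining polynomials has rank 5. -/

import Mathlib

/-- The Jacobian matrix of the five quadrics defining `Ŝ_μ` at the point `x`,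
where `ν = ![1, μ₄, μ₅, μ₆, μ₇]`: row `i` is the gradient of
`ν i · x₁² + x₂² + x_{i+3}²`. -/
def jac (ν : Fin 5 → ℂ) (x : Fin 7 → ℂ) : Matrix (Fin 5) (Fin 7) ℂ :=
  Matrix.of fun i j =>
    if j = 0 then 2 * ν i * x 0
    else if j = 1 then 2 * x 1
    else if (j : ℕ) = (i : ℕ) + 2 then 2 * x j
    else 0

lemma rank_eq_five_of_det (A : Matrix (Fin 5) (Fin 7) ℂ) (f : Fin 5 → Fin 7)
    (hd : (A.submatrix id f).det ≠ 0) : A.rank = 5 := by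
  refine le_antisymm (Matrix.rank_le_height A) ?_
  have h : A.submatrix id f = A * (1 : Matrix (Fin 7) (Fin 7) ℂ).submatrix (Equiv.refl _) f := by
    rw [Matrix.mul_submatrix_one]; rfl
  have h2 : (A.submatrix id f).rank ≤ A.rank := by
    rw [h]; exact Matrix.rank_mul_le_left _ _
  have h3 : (A.submatrix id f).rank = 5 := by
    rw [Matrix.rank_of_isUnit _ (by
      rw [Matrix.isUnit_iff_isUnit_det]; exact isUnit_iff_ne_zero.mpr hd)]
    simp
  omega

set_option maxHeartbeats 1600000 in
/-- The generalized Fermat curve `Ŝ_μ` of type `(2,6)` is smooth: at each nonzero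
solution of the five defining quadrics the `5×7` Jacobian matrix has rank `5`. -/
theorem generalized_fermat_smooth (μ₄ μ₅ μ₆ μ₇ : ℂ)
    (h01 : ∀ μ ∈ ({μ₄, μ₅, μ₆, μ₇} : Set ℂ), μ ≠ 0 ∧ μ ≠ 1)
    (hdist : μ₄ ≠ μ₅ ∧ μ₄ ≠ μ₆ ∧ μ₄ ≠ μ₇ ∧ μ₅ ≠ μ₆ ∧ μ₅ ≠ μ₇ ∧ μ₆ ≠ μ₇)
    (x : Fin 7 → ℂ) (hx : x ≠ 0)
    (h1 : x 0 ^ 2 + x 1 ^ 2 + x 2 ^ 2 = 0)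
    (h2 : μ₄ * x 0 ^ 2 + x 1 ^ 2 + x 3 ^ 2 = 0)
    (h3 : μ₅ * x 0 ^ 2 + x 1 ^ 2 + x 4 ^ 2 = 0)
    (h4 : μ₆ * x 0 ^ 2 + x 1 ^ 2 + x 5 ^ 2 = 0)
    (h5 : μ₇ * x 0 ^ 2 + x 1 ^ 2 + x 6 ^ 2 = 0) :
    (jac ![1, μ₄, μ₅, μ₆, μ₇] x).rank = 5 := by
  obtain ⟨hd45, hd46, hd47, hd56, hd57, hd67⟩ := hdist
  obtain ⟨h40, h41⟩ := h01 μ₄ (by simp)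
  obtain ⟨h50, h51⟩ := h01 μ₅ (by simp)
  obtain ⟨h60, h61⟩ := h01 μ₆ (by simp)
  obtain ⟨h70, h71⟩ := h01 μ₇ (by simp)
  have sq0 : ∀ a : ℂ, a ^ 2 = 0 → a = 0 := fun a h => by
    exact pow_eq_zero_iff (by norm_num) |>.mp h
  by_cases hA : x 2 = 0
  · -- x₂ = 0; then x₀, x₃, x₄, x₅, x₆ are all nonzero
    have hx0 : x 0 ≠ 0 := by
      intro h0
      have hx1 : x 1 = 0 := sq0 _ (by linear_combination h1 - x 0 * h0 - x 2 * hA)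
      have hx3 : x 3 = 0 := sq0 _ (by linear_combination h2 - μ₄ * x 0 * h0 - x 1 * hx1)
      have hx4 : x 4 = 0 := sq0 _ (by linear_combination h3 - μ₅ * x 0 * h0 - x 1 * hx1)
      have hx5 : x 5 = 0 := sq0 _ (by linear_combination h4 - μ₆ * x 0 * h0 - x 1 * hx1)
      have hx6 : x 6 = 0 := sq0 _ (by linear_combination h5 - μ₇ * x 0 * h0 - x 1 * hx1)
      exact hx (by funext i; fin_cases i <;> assumption)
    have key : ∀ μ : ℂ, μ ≠ 1 → ∀ a : ℂ, μ * x 0 ^ 2 + x 1 ^ 2 + a ^ 2 = 0 → a ≠ 0 := by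
      intro μ hμ a ha ha0
      have : (μ - 1) * x 0 ^ 2 = 0 := by
        linear_combination ha - h1 + x 2 * hA - a * ha0
      rcases mul_eq_zero.mp this with h | h
      · exact hμ (by linear_combination h)
      · exact hx0 (sq0 _ h)
    have hx3 := key μ₄ h41 (x 3) h2
    have hx4 := key μ₅ h51 (x 4) h3
    have hx5 := key μ₆ h61 (x 5) h4
    have hx6 := key μ₇ h71 (x 6) h5
    apply rank_eq_five_of_det _ ![0, 3, 4, 5, 6]
    have hM : (jac ![1, μ₄, μ₅, μ₆, μ₇] x).submatrix id ![0, 3, 4, 5, 6] =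
        !![2 * x 0, 0, 0, 0, 0;
           2 * μ₄ * x 0, 2 * x 3, 0, 0, 0;
           2 * μ₅ * x 0, 0, 2 * x 4, 0, 0;
           2 * μ₆ * x 0, 0, 0, 2 * x 5, 0;
           2 * μ₇ * x 0, 0, 0, 0, 2 * x 6] := by
      ext i j
      fin_cases i <;> fin_cases j <;>
        simp [jac, Matrix.vecHead, Matrix.vecTail] <;>
        (intro h; exact absurd h (by decide))
    rw [hM, show (!![2 * x 0, 0, 0, 0, 0;
           2 * μ₄ * x 0, 2 * x 3, 0, 0, 0;
           2 * μ₅ * x 0, 0, 2 * x 4, 0, 0;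
           2 * μ₆ * x 0, 0, 0, 2 * x 5, 0;
           2 * μ₇ * x 0, 0, 0, 0, 2 * x 6]).det
        = (2 * x 0) * (2 * x 3) * (2 * x 4) * (2 * x 5) * (2 * x 6) from by
          simp [Matrix.det_succ_row_zero, Fin.sum_univ_succ, Fin.succAbove]; ring]
    exact mul_ne_zero (mul_ne_zero (mul_ne_zero (mul_ne_zero
      (mul_ne_zero two_ne_zero hx0) (mul_ne_zero two_ne_zero hx3))
      (mul_ne_zero two_ne_zero hx4)) (mul_ne_zero two_ne_zero hx5))
      (mul_ne_zero two_ne_zero hx6)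
  · by_cases hB : x 3 = 0
    · have hx0 : x 0 ≠ 0 := by
        intro h0
        have hx1 : x 1 = 0 := sq0 _ (by linear_combination h2 - μ₄ * x 0 * h0 - x 3 * hB)
        exact hA (sq0 _ (by linear_combination h1 - x 0 * h0 - x 1 * hx1))
      have key : ∀ μ : ℂ, μ ≠ μ₄ → ∀ a : ℂ, μ * x 0 ^ 2 + x 1 ^ 2 + a ^ 2 = 0 → a ≠ 0 := by
        intro μ hμ a ha ha0
        have : (μ - μ₄) * x 0 ^ 2 = 0 := by
          linear_combination ha - h2 + x 3 * hB - a * ha0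
        rcases mul_eq_zero.mp this with h | h
        · exact hμ (by linear_combination h)
        · exact hx0 (sq0 _ h)
      have hx4 := key μ₅ hd45.symm (x 4) h3
      have hx5 := key μ₆ hd46.symm (x 5) h4
      have hx6 := key μ₇ hd47.symm (x 6) h5
      apply rank_eq_five_of_det _ ![0, 2, 4, 5, 6]
      have hM : (jac ![1, μ₄, μ₅, μ₆, μ₇] x).submatrix id ![0, 2, 4, 5, 6] =
          !![2 * x 0, 2 * x 2, 0, 0, 0;
             2 * μ₄ * x 0, 0, 0, 0, 0;
             2 * μ₅ * x 0, 0, 2 * x 4, 0, 0;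
             2 * μ₆ * x 0, 0, 0, 2 * x 5, 0;
             2 * μ₇ * x 0, 0, 0, 0, 2 * x 6] := by
        ext i j
        fin_cases i <;> fin_cases j <;>
          simp [jac, Matrix.vecHead, Matrix.vecTail] <;>
          (intro h; exact absurd h (by decide))
      rw [hM, show (!![2 * x 0, 2 * x 2, 0, 0, 0;
             2 * μ₄ * x 0, 0, 0, 0, 0;
             2 * μ₅ * x 0, 0, 2 * x 4, 0, 0;
             2 * μ₆ * x 0, 0, 0, 2 * x 5, 0;
             2 * μ₇ * x 0, 0, 0, 0, 2 * x 6]).det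
          = -((2 * (μ₄ * x 0)) * (2 * x 2) * (2 * x 4) * (2 * x 5) * (2 * x 6)) from by
            simp [Matrix.det_succ_row_zero, Fin.sum_univ_succ, Fin.succAbove]; ring]
      exact neg_ne_zero.mpr (mul_ne_zero (mul_ne_zero (mul_ne_zero (mul_ne_zero
        (mul_ne_zero two_ne_zero (mul_ne_zero h40 hx0)) (mul_ne_zero two_ne_zero hA))
        (mul_ne_zero two_ne_zero hx4)) (mul_ne_zero two_ne_zero hx5))
        (mul_ne_zero two_ne_zero hx6))
    · by_cases hC : x 4 = 0
      · have hx0 : x 0 ≠ 0 := by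
          intro h0
          have hx1 : x 1 = 0 := sq0 _ (by linear_combination h3 - μ₅ * x 0 * h0 - x 4 * hC)
          exact hA (sq0 _ (by linear_combination h1 - x 0 * h0 - x 1 * hx1))
        have key : ∀ μ : ℂ, μ ≠ μ₅ → ∀ a : ℂ, μ * x 0 ^ 2 + x 1 ^ 2 + a ^ 2 = 0 → a ≠ 0 := by
          intro μ hμ a ha ha0
          have : (μ - μ₅) * x 0 ^ 2 = 0 := by
            linear_combination ha - h3 + x 4 * hC - a * ha0
          rcases mul_eq_zero.mp this with h | h
          · exact hμ (by linear_combination h)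
          · exact hx0 (sq0 _ h)
        have hx5 := key μ₆ hd56.symm (x 5) h4
        have hx6 := key μ₇ hd57.symm (x 6) h5
        apply rank_eq_five_of_det _ ![0, 2, 3, 5, 6]
        have hM : (jac ![1, μ₄, μ₅, μ₆, μ₇] x).submatrix id ![0, 2, 3, 5, 6] =
            !![2 * x 0, 2 * x 2, 0, 0, 0;
               2 * μ₄ * x 0, 0, 2 * x 3, 0, 0;
               2 * μ₅ * x 0, 0, 0, 0, 0;
               2 * μ₆ * x 0, 0, 0, 2 * x 5, 0;
               2 * μ₇ * x 0, 0, 0, 0, 2 * x 6] := by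
          ext i j
          fin_cases i <;> fin_cases j <;>
            simp [jac, Matrix.vecHead, Matrix.vecTail] <;>
            (intro h; exact absurd h (by decide))
        rw [hM, show (!![2 * x 0, 2 * x 2, 0, 0, 0;
               2 * μ₄ * x 0, 0, 2 * x 3, 0, 0;
               2 * μ₅ * x 0, 0, 0, 0, 0;
               2 * μ₆ * x 0, 0, 0, 2 * x 5, 0;
               2 * μ₇ * x 0, 0, 0, 0, 2 * x 6]).det
            = (2 * (μ₅ * x 0)) * (2 * x 2) * (2 * x 3) * (2 * x 5) * (2 * x 6) from by
              simp [Matrix.det_succ_row_zero, Fin.sum_univ_succ, Fin.succAbove]; ring]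
        exact mul_ne_zero (mul_ne_zero (mul_ne_zero (mul_ne_zero
          (mul_ne_zero two_ne_zero (mul_ne_zero h50 hx0)) (mul_ne_zero two_ne_zero hA))
          (mul_ne_zero two_ne_zero hB)) (mul_ne_zero two_ne_zero hx5))
          (mul_ne_zero two_ne_zero hx6)
      · by_cases hD : x 5 = 0
        · have hx0 : x 0 ≠ 0 := by
            intro h0
            have hx1 : x 1 = 0 := sq0 _ (by linear_combination h4 - μ₆ * x 0 * h0 - x 5 * hD)
            exact hA (sq0 _ (by linear_combination h1 - x 0 * h0 - x 1 * hx1))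
          have hx6 : x 6 ≠ 0 := by
            intro ha0
            have : (μ₇ - μ₆) * x 0 ^ 2 = 0 := by
              linear_combination h5 - h4 + x 5 * hD - x 6 * ha0
            rcases mul_eq_zero.mp this with h | h
            · exact hd67.symm (by linear_combination h)
            · exact hx0 (sq0 _ h)
          apply rank_eq_five_of_det _ ![0, 2, 3, 4, 6]
          have hM : (jac ![1, μ₄, μ₅, μ₆, μ₇] x).submatrix id ![0, 2, 3, 4, 6] =
              !![2 * x 0, 2 * x 2, 0, 0, 0;
                 2 * μ₄ * x 0, 0, 2 * x 3, 0, 0;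
                 2 * μ₅ * x 0, 0, 0, 2 * x 4, 0;
                 2 * μ₆ * x 0, 0, 0, 0, 0;
                 2 * μ₇ * x 0, 0, 0, 0, 2 * x 6] := by
            ext i j
            fin_cases i <;> fin_cases j <;>
              simp [jac, Matrix.vecHead, Matrix.vecTail] <;>
              (intro h; exact absurd h (by decide))
          rw [hM, show (!![2 * x 0, 2 * x 2, 0, 0, 0;
                 2 * μ₄ * x 0, 0, 2 * x 3, 0, 0;
                 2 * μ₅ * x 0, 0, 0, 2 * x 4, 0;
                 2 * μ₆ * x 0, 0, 0, 0, 0;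
                 2 * μ₇ * x 0, 0, 0, 0, 2 * x 6]).det
              = -((2 * (μ₆ * x 0)) * (2 * x 2) * (2 * x 3) * (2 * x 4) * (2 * x 6)) from by
                simp [Matrix.det_succ_row_zero, Fin.sum_univ_succ, Fin.succAbove]; ring]
          exact neg_ne_zero.mpr (mul_ne_zero (mul_ne_zero (mul_ne_zero (mul_ne_zero
            (mul_ne_zero two_ne_zero (mul_ne_zero h60 hx0)) (mul_ne_zero two_ne_zero hA))
            (mul_ne_zero two_ne_zero hB)) (mul_ne_zero two_ne_zero hC))
            (mul_ne_zero two_ne_zero hx6))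
        · by_cases hE : x 6 = 0
          · have hx0 : x 0 ≠ 0 := by
              intro h0
              have hx1 : x 1 = 0 := sq0 _ (by linear_combination h5 - μ₇ * x 0 * h0 - x 6 * hE)
              exact hA (sq0 _ (by linear_combination h1 - x 0 * h0 - x 1 * hx1))
            apply rank_eq_five_of_det _ ![0, 2, 3, 4, 5]
            have hM : (jac ![1, μ₄, μ₅, μ₆, μ₇] x).submatrix id ![0, 2, 3, 4, 5] =
                !![2 * x 0, 2 * x 2, 0, 0, 0;
                   2 * μ₄ * x 0, 0, 2 * x 3, 0, 0;
                   2 * μ₅ * x 0, 0, 0, 2 * x 4, 0;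
                   2 * μ₆ * x 0, 0, 0, 0, 2 * x 5;
                   2 * μ₇ * x 0, 0, 0, 0, 0] := by
              ext i j
              fin_cases i <;> fin_cases j <;>
                simp [jac, Matrix.vecHead, Matrix.vecTail] <;>
                (intro h; exact absurd h (by decide))
            rw [hM, show (!![2 * x 0, 2 * x 2, 0, 0, 0;
                   2 * μ₄ * x 0, 0, 2 * x 3, 0, 0;
                   2 * μ₅ * x 0, 0, 0, 2 * x 4, 0;
                   2 * μ₆ * x 0, 0, 0, 0, 2 * x 5;
                   2 * μ₇ * x 0, 0, 0, 0, 0]).det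
                = (2 * (μ₇ * x 0)) * (2 * x 2) * (2 * x 3) * (2 * x 4) * (2 * x 5) from by
                  simp [Matrix.det_succ_row_zero, Fin.sum_univ_succ, Fin.succAbove]; ring]
            exact mul_ne_zero (mul_ne_zero (mul_ne_zero (mul_ne_zero
              (mul_ne_zero two_ne_zero (mul_ne_zero h70 hx0)) (mul_ne_zero two_ne_zero hA))
              (mul_ne_zero two_ne_zero hB)) (mul_ne_zero two_ne_zero hC))
              (mul_ne_zero two_ne_zero hD)
          · apply rank_eq_five_of_det _ ![2, 3, 4, 5, 6]
            have hM : (jac ![1, μ₄, μ₅, μ₆, μ₇] x).submatrix id ![2, 3, 4, 5, 6] =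
                !![2 * x 2, 0, 0, 0, 0;
                   0, 2 * x 3, 0, 0, 0;
                   0, 0, 2 * x 4, 0, 0;
                   0, 0, 0, 2 * x 5, 0;
                   0, 0, 0, 0, 2 * x 6] := by
              ext i j
              fin_cases i <;> fin_cases j <;>
                simp [jac, Matrix.vecHead, Matrix.vecTail] <;>
                (intro h; exact absurd h (by decide))
            rw [hM, show (!![2 * x 2, 0, 0, 0, 0;
                   0, 2 * x 3, 0, 0, 0;
                   0, 0, 2 * x 4, 0, 0;
                   0, 0, 0, 2 * x 5, 0;
                   0, 0, 0, 0, 2 * x 6]).det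
                = (2 * x 2) * (2 * x 3) * (2 * x 4) * (2 * x 5) * (2 * x 6) from by
                  simp [Matrix.det_succ_row_zero, Fin.sum_univ_succ, Fin.succAbove]; ring]
            exact mul_ne_zero (mul_ne_zero (mul_ne_zero (mul_ne_zero
              (mul_ne_zero two_ne_zero hA) (mul_ne_zero two_ne_zero hB))
              (mul_ne_zero two_ne_zero hC)) (mul_ne_zero two_ne_zero hD))
              (mul_ne_zero two_ne_zero hE)
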